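/- Let p₀, p₁ be α-strongly log-concave probability densities on ℝᵈ (i.e., −log p_j is α-strongly convex). Then there exist constants c₀, c₁ > 0 such that the density p_t of X_t = (1−t)X₀ + tX₁, for independent X₀ ∼ p₀ and X₁ ∼ p₁, satisfies p_t(z) ≤ c₀ exp(−c₁‖z‖²) for all z ∈ ℝᵈ and all t ∈ [0,1]. -/

import Mathlib

open MeasureTheory

/-- Gaussian integrability on Euclidean space (real version). -/
lemma integrable_gauss_euclidean {d : ℕ} {b : ℝ} (hb : 0 < b) :
    Integrable (fun v : EuclideanSpace ℝ (Fin d) => Real.exp (-b * ‖v‖ ^ 2)) := by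
  have h := (GaussianFourier.integrable_cexp_neg_mul_sq_norm_add (V := EuclideanSpace ℝ (Fin d))
    (b := (b : ℂ)) (by simpa using hb) 0 0).norm
  apply h.congr
  filter_upwards with v
  have hz : (-(b : ℂ) * (‖v‖ : ℂ) ^ 2 + 0 * ((inner ℝ (0 : EuclideanSpace ℝ (Fin d)) v : ℝ) : ℂ)) = ((-b * ‖v‖ ^ 2 : ℝ) : ℂ) := by
    push_cast; ring
  rw [hz, Complex.norm_exp, Complex.ofReal_re]


private lemma quad_aux {a r K s : ℝ} (h1 : -(2 * K) * (1 + r) ≤ s)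
    (h4 : 0 ≤ a / 4 * r ^ 2 - 2 * K * r + 4 * K ^ 2 / a) :
    a / 4 * r ^ 2 - (2 * K + 4 * K ^ 2 / a) ≤ s + a / 2 * r ^ 2 := by linarith

private lemma key_aux {r p0 px pu : ℝ} (hr : 0 < r)
    (hconv : pu ≤ (1 - r⁻¹) * p0 + r⁻¹ * px) : r * pu - (r - 1) * p0 ≤ px := by
  have h6 := mul_le_mul_of_nonneg_left hconv hr.le
  have h7 : r * ((1 - r⁻¹) * p0 + r⁻¹ * px) = (r - 1) * p0 + px := by
    field_simp
  rw [h7] at h6; linarith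

private lemma lin_aux {r K pu p0 px : ℝ} (hr1 : 1 < r) (h1 : -K ≤ pu) (h2 : p0 ≤ K)
    (hK : 0 < K) (hkey : r * pu - (r - 1) * p0 ≤ px) : -(2 * K) * (1 + r) ≤ px := by
  nlinarith [mul_le_mul_of_nonneg_left h1 (by linarith : (0:ℝ) ≤ r),
    mul_le_mul_of_nonneg_left h2 (by linarith : (0:ℝ) ≤ r - 1)]

/-- Pointwise Gaussian upper bound for a strongly log-concave positive function. -/
lemma slc_pointwise_bound {d : ℕ} (p : EuclideanSpace ℝ (Fin d) → ℝ) (α : ℝ) (hα : 0 < α)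
    (hpos : ∀ x, 0 < p x)
    (hslc : StrongConvexOn Set.univ α (fun x => -Real.log (p x))) :
    ∃ C > (0 : ℝ), ∀ x, p x ≤ C * Real.exp (-(α / 4) * ‖x‖ ^ 2) := by
  set φ : EuclideanSpace ℝ (Fin d) → ℝ := fun x => -Real.log (p x) with hφ
  have hψ : ConvexOn ℝ Set.univ (fun x => φ x - α / 2 * ‖x‖ ^ 2) :=
    strongConvexOn_iff_convex.mp hslc
  set ψ : EuclideanSpace ℝ (Fin d) → ℝ := fun x => φ x - α / 2 * ‖x‖ ^ 2 with hψdef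
  -- ψ is continuous, hence bounded on the closed unit ball
  have hcont : Continuous ψ := hψ.locallyLipschitz.continuous
  obtain ⟨K, hK⟩ := (isCompact_closedBall (0 : EuclideanSpace ℝ (Fin d)) 1).exists_bound_of_continuousOn
    hcont.continuousOn
  set K₀ : ℝ := max K 1 with hK₀def
  have hK₀pos : 0 < K₀ := lt_of_lt_of_le one_pos (le_max_right _ _)
  have hKb : ∀ x : EuclideanSpace ℝ (Fin d), ‖x‖ ≤ 1 → |ψ x| ≤ K₀ := by
    intro x hx
    exact le_trans (hK x (by simpa [Metric.mem_closedBall, dist_zero_right] using hx))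
      (le_max_left _ _)
  -- linear lower bound on ψ
  have hlin : ∀ x : EuclideanSpace ℝ (Fin d), -(2 * K₀) * (1 + ‖x‖) ≤ ψ x := by
    intro x
    rcases le_or_gt ‖x‖ 1 with hx | hx
    · have h1 := hKb x hx
      have h2 : 0 ≤ ‖x‖ := norm_nonneg x
      have := neg_abs_le (ψ x)
      nlinarith
    · have hr : (0 : ℝ) < ‖x‖ := lt_trans one_pos hx
      set r : ℝ := ‖x‖ with hrdef
      have hu : ‖r⁻¹ • x‖ = 1 := by
        rw [norm_smul, Real.norm_eq_abs, abs_of_pos (inv_pos.mpr hr)]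
        field_simp
        exact hrdef.symm
      have hconv := hψ.2 (Set.mem_univ (0 : EuclideanSpace ℝ (Fin d))) (Set.mem_univ x)
        (show (0 : ℝ) ≤ 1 - r⁻¹ by rw [sub_nonneg]; exact inv_le_one_of_one_le₀ hx.le)
        (show (0 : ℝ) ≤ r⁻¹ from (inv_pos.mpr hr).le)
        (show (1 - r⁻¹) + r⁻¹ = 1 by ring)
      simp only [smul_zero, zero_add, smul_eq_mul] at hconv
      have hu' : |ψ (r⁻¹ • x)| ≤ K₀ := hKb _ (le_of_eq hu)
      have h0' : |ψ (0 : EuclideanSpace ℝ (Fin d))| ≤ K₀ := hKb _ (by simp)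
      have h1 : -K₀ ≤ ψ (r⁻¹ • x) := by
        have := neg_abs_le (ψ (r⁻¹ • x)); linarith
      have h2 : ψ (0 : EuclideanSpace ℝ (Fin d)) ≤ K₀ := le_trans (le_abs_self _) h0'
      exact lin_aux hx h1 h2 hK₀pos (key_aux hr hconv)
  -- quadratic lower bound on φ
  have hquad : ∀ x : EuclideanSpace ℝ (Fin d),
      α / 4 * ‖x‖ ^ 2 - (2 * K₀ + 4 * K₀ ^ 2 / α) ≤ φ x := by
    intro x
    have h1 := hlin x
    have h2 : 0 ≤ ‖x‖ := norm_nonneg x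
    have hφx : φ x = ψ x + α / 2 * ‖x‖ ^ 2 := by simp [hψdef]
    rw [hφx]
    have hexp : (α * ‖x‖ - 4 * K₀) ^ 2 / (4 * α)
        = α / 4 * ‖x‖ ^ 2 - 2 * K₀ * ‖x‖ + 4 * K₀ ^ 2 / α := by
      field_simp; ring
    have h4 : 0 ≤ (α * ‖x‖ - 4 * K₀) ^ 2 / (4 * α) :=
      div_nonneg (sq_nonneg _) (by positivity)
    rw [hexp] at h4
    exact quad_aux h1 h4
  refine ⟨Real.exp (2 * K₀ + 4 * K₀ ^ 2 / α), Real.exp_pos _, fun x => ?_⟩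
  have hpx : p x = Real.exp (-(φ x)) := by
    simp [hφ, Real.exp_log (hpos x)]
  rw [hpx, ← Real.exp_add]
  apply Real.exp_le_exp.mpr
  have := hquad x
  linarith

theorem strongly_logconcave_density_gaussian_bound
    {d : ℕ} (p₀ p₁ : EuclideanSpace ℝ (Fin d) → ℝ) (α : ℝ) (hα : 0 < α)
    (hpos₀ : ∀ x, 0 < p₀ x) (hpos₁ : ∀ x, 0 < p₁ x)
    (hint₀ : ∫ x, p₀ x = 1) (hint₁ : ∫ x, p₁ x = 1)
    (hslc₀ : StrongConvexOn Set.univ α (fun x => -Real.log (p₀ x)))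
    (hslc₁ : StrongConvexOn Set.univ α (fun x => -Real.log (p₁ x))) :
    ∃ c₀ > (0 : ℝ), ∃ c₁ > (0 : ℝ), ∀ t ∈ Set.Icc (0 : ℝ) 1, ∀ z : EuclideanSpace ℝ (Fin d),
      (∫ δ, p₀ (z - t • δ) * p₁ (z + (1 - t) • δ)) ≤ c₀ * Real.exp (-c₁ * ‖z‖ ^ 2) := by
  obtain ⟨C₀, hC₀pos, hC₀⟩ := slc_pointwise_bound p₀ α hα hpos₀ hslc₀
  obtain ⟨C₁, hC₁pos, hC₁⟩ := slc_pointwise_bound p₁ α hα hpos₁ hslc₁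
  set c₁ : ℝ := α / 16 with hc₁def
  have hc₁pos : 0 < c₁ := by positivity
  have hgauss : Integrable (fun v : EuclideanSpace ℝ (Fin d) => Real.exp (-c₁ * ‖v‖ ^ 2)) :=
    integrable_gauss_euclidean hc₁pos
  set G : ℝ := ∫ v : EuclideanSpace ℝ (Fin d), Real.exp (-c₁ * ‖v‖ ^ 2) with hGdef
  have hGnn : 0 ≤ G := integral_nonneg fun v => (Real.exp_pos _).le
  refine ⟨C₀ * C₁ * (G + 1), by positivity, c₁, hc₁pos, ?_⟩
  rintro t ⟨ht0, ht1⟩ z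
  set K : ℝ := C₀ * C₁ * Real.exp (-c₁ * ‖z‖ ^ 2) with hKdef
  have hKnn : 0 ≤ K := by positivity
  -- pointwise bound on the integrand
  have hpt : ∀ δ : EuclideanSpace ℝ (Fin d),
      p₀ (z - t • δ) * p₁ (z + (1 - t) • δ) ≤ K * Real.exp (-c₁ * ‖δ‖ ^ 2) := by
    intro δ
    set u := z - t • δ with hu
    set v := z + (1 - t) • δ with hv
    have hz : z = (1 - t) • u + t • v := by rw [hu, hv]; module
    have hδ : δ = v - u := by rw [hu, hv]; module
    have hzn : ‖z‖ ≤ ‖u‖ + ‖v‖ := by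
      calc ‖z‖ = ‖(1 - t) • u + t • v‖ := by rw [← hz]
        _ ≤ ‖(1 - t) • u‖ + ‖t • v‖ := norm_add_le _ _
        _ = (1 - t) * ‖u‖ + t * ‖v‖ := by
            rw [norm_smul, norm_smul, Real.norm_eq_abs, Real.norm_eq_abs,
              abs_of_nonneg (by linarith), abs_of_nonneg ht0]
        _ ≤ ‖u‖ + ‖v‖ := by nlinarith [norm_nonneg u, norm_nonneg v]
    have hδn : ‖δ‖ ≤ ‖u‖ + ‖v‖ := by
      calc ‖δ‖ = ‖v - u‖ := by rw [← hδ]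
        _ ≤ ‖v‖ + ‖u‖ := norm_sub_le _ _
        _ = ‖u‖ + ‖v‖ := by ring
    have hgeo : c₁ * ‖z‖ ^ 2 + c₁ * ‖δ‖ ^ 2 ≤ α / 4 * ‖u‖ ^ 2 + α / 4 * ‖v‖ ^ 2 := by
      have h1 : ‖z‖ ^ 2 + ‖δ‖ ^ 2 ≤ 2 * (‖u‖ + ‖v‖) ^ 2 := by
        nlinarith [norm_nonneg z, norm_nonneg δ]
      have h2 : (‖u‖ + ‖v‖) ^ 2 ≤ 2 * (‖u‖ ^ 2 + ‖v‖ ^ 2) := by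
        nlinarith [sq_nonneg (‖u‖ - ‖v‖)]
      rw [hc₁def]; nlinarith
    have e1 : Real.exp (-(α / 4) * ‖u‖ ^ 2) * Real.exp (-(α / 4) * ‖v‖ ^ 2)
        ≤ Real.exp (-c₁ * ‖z‖ ^ 2) * Real.exp (-c₁ * ‖δ‖ ^ 2) := by
      rw [← Real.exp_add, ← Real.exp_add]
      exact Real.exp_le_exp.mpr (by linarith)
    calc p₀ u * p₁ v
        ≤ (C₀ * Real.exp (-(α / 4) * ‖u‖ ^ 2)) * (C₁ * Real.exp (-(α / 4) * ‖v‖ ^ 2)) := by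
          apply mul_le_mul (hC₀ u) (hC₁ v) (hpos₁ v).le (by positivity)
      _ = C₀ * C₁ * (Real.exp (-(α / 4) * ‖u‖ ^ 2) * Real.exp (-(α / 4) * ‖v‖ ^ 2)) := by ring
      _ ≤ C₀ * C₁ * (Real.exp (-c₁ * ‖z‖ ^ 2) * Real.exp (-c₁ * ‖δ‖ ^ 2)) :=
          mul_le_mul_of_nonneg_left e1 (by positivity)
      _ = K * Real.exp (-c₁ * ‖δ‖ ^ 2) := by rw [hKdef]; ring
  -- integrate the pointwise bound
  have hgi : Integrable (fun δ : EuclideanSpace ℝ (Fin d) => K * Real.exp (-c₁ * ‖δ‖ ^ 2)) :=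
    hgauss.const_mul K
  have hmono : (∫ δ, p₀ (z - t • δ) * p₁ (z + (1 - t) • δ)) ≤
      ∫ δ : EuclideanSpace ℝ (Fin d), K * Real.exp (-c₁ * ‖δ‖ ^ 2) := by
    apply integral_mono_of_nonneg
    · exact Filter.Eventually.of_forall fun δ => mul_nonneg (hpos₀ _).le (hpos₁ _).le
    · exact hgi
    · exact Filter.Eventually.of_forall hpt
  have hval : (∫ δ : EuclideanSpace ℝ (Fin d), K * Real.exp (-c₁ * ‖δ‖ ^ 2)) = K * G := by
    rw [hGdef, integral_const_mul]
  calc (∫ δ, p₀ (z - t • δ) * p₁ (z + (1 - t) • δ)) ≤ K * G := by rw [← hval]; exact hmono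
    _ ≤ C₀ * C₁ * (G + 1) * Real.exp (-c₁ * ‖z‖ ^ 2) := by
        rw [hKdef]; nlinarith [Real.exp_pos (-c₁ * ‖z‖ ^ 2), mul_pos hC₀pos hC₁pos]
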